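/- Let p be an odd prime and A = F_p[C, V] a polynomial ring in two variables. Set D_1 = C^p + V and D_2 = C V, and let D = F_p[D_1, D_2] ⊆ A. Then A is a free D-module with basis 1, C, C^2, …, C^{p-1}, V; that is, A = D{1, C, …, C^{p-1}, V}. -/

import Mathlib

open MvPolynomial

noncomputable section
namespace Stmt11Aux
variable (p : ℕ)

abbrev R := MvPolynomial (Fin 2) (ZMod p)

def gv : Fin 2 → R p := ![X 0 ^ p + X 1, X 0 * X 1]

def ee : R p →ₐ[ZMod p] R p := aeval (gv p)

def fpoly : Polynomial (R p) :=
  Polynomial.X ^ (p + 1) - Polynomial.C (X 0) * Polynomial.X + Polynomial.C (X 1)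

lemma ee_X0 : ee p (X 0) = X 0 ^ p + X 1 := by simp [ee, gv]
lemma ee_X1 : ee p (X 1) = X 0 * X 1 := by simp [ee, gv]

lemma eval_fpoly : Polynomial.eval₂ (ee p).toRingHom (X 0) (fpoly p) = 0 := by
  simp [fpoly, ee, gv]; ring

def up : AdjoinRoot (fpoly p) →+* R p :=
  AdjoinRoot.lift (ee p).toRingHom (X 0) (eval_fpoly p)

def dvec : Fin 2 → AdjoinRoot (fpoly p) :=
  ![AdjoinRoot.root (fpoly p),
    AdjoinRoot.of (fpoly p) (X 0) - AdjoinRoot.root (fpoly p) ^ p]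

def down : R p →+* AdjoinRoot (fpoly p) := (aeval (dvec p)).toRingHom

lemma key_rel : AdjoinRoot.root (fpoly p) ^ (p + 1)
    - AdjoinRoot.of (fpoly p) (X 0) * AdjoinRoot.root (fpoly p)
    + AdjoinRoot.of (fpoly p) (X 1) = 0 := by
  have h := AdjoinRoot.mk_self (f := fpoly p)
  rw [fpoly] at h
  simp [map_add, map_sub, map_mul, map_pow, AdjoinRoot.mk_X, AdjoinRoot.mk_C] at h
  exact h

lemma down_ee (a : R p) : down p (ee p a) = AdjoinRoot.of (fpoly p) a := by
  have : (down p).comp (ee p).toRingHom = AdjoinRoot.of (fpoly p) := by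
    apply MvPolynomial.ringHom_ext
    · intro r
      exact RingHom.congr_fun
        (RingHom.ext_zmod (((down p).comp (ee p).toRingHom).comp (C : ZMod p →+* R p))
          ((AdjoinRoot.of (fpoly p)).comp (C : ZMod p →+* R p))) r
    · intro i
      fin_cases i
      · show down p (ee p (X 0)) = _
        rw [ee_X0]
        simp [down, dvec]
      · show down p (ee p (X 1)) = AdjoinRoot.of (fpoly p) (X 1)
        rw [ee_X1]
        simp only [down, AlgHom.toRingHom_eq_coe, RingHom.coe_coe, map_mul, aeval_X, dvec]
        have h := key_rel p
        simp only [Matrix.cons_val_zero, Matrix.cons_val_one, Matrix.head_cons]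
        linear_combination -h
  exact RingHom.congr_fun this a

lemma down_up (z : AdjoinRoot (fpoly p)) : down p (up p z) = z := by
  obtain ⟨P, rfl⟩ := AdjoinRoot.mk_surjective z
  have : ((down p).comp (up p)).comp (AdjoinRoot.mk (fpoly p)) = AdjoinRoot.mk (fpoly p) := by
    apply Polynomial.ringHom_ext
    · intro a
      show down p (up p (AdjoinRoot.mk (fpoly p) (Polynomial.C a))) = _
      rw [AdjoinRoot.mk_C, up, AdjoinRoot.lift_of]
      show down p (ee p a) = _
      rw [down_ee]
    · show down p (up p (AdjoinRoot.mk (fpoly p) Polynomial.X)) = _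
      rw [AdjoinRoot.mk_X, up, AdjoinRoot.lift_root]
      simp [down, dvec, AdjoinRoot.mk_X]
  exact RingHom.congr_fun this P

lemma fpoly_eq : fpoly p = Polynomial.X ^ (p + 1)
    + (Polynomial.C (X 1) - Polynomial.C (X 0) * Polynomial.X) := by
  rw [fpoly]; ring

lemma deg_rest (hp : p ≠ 0) :
    (Polynomial.C (X 1 : R p) - Polynomial.C (X 0) * Polynomial.X).degree
    < ((p + 1 : ℕ) : WithBot ℕ) := by
  apply lt_of_le_of_lt (Polynomial.degree_sub_le _ _)
  rw [max_lt_iff]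
  constructor
  · exact lt_of_le_of_lt Polynomial.degree_C_le (by exact_mod_cast Nat.succ_pos p)
  · apply lt_of_le_of_lt (Polynomial.degree_mul_le _ _)
    apply lt_of_le_of_lt (add_le_add Polynomial.degree_C_le Polynomial.degree_X_le)
    rw [zero_add]
    exact_mod_cast Nat.succ_lt_succ (Nat.pos_of_ne_zero hp)

lemma monic_fpoly (hp : p ≠ 0) : (fpoly p).Monic := by
  rw [fpoly_eq]
  exact Polynomial.monic_X_pow_add (deg_rest p hp)

lemma degree_fpoly (hp : p.Prime) : (fpoly p).degree = ((p + 1 : ℕ) : WithBot ℕ) := by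
  haveI := Fact.mk hp
  rw [fpoly_eq, Polynomial.degree_add_eq_left_of_degree_lt, Polynomial.degree_X_pow]
  rw [Polynomial.degree_X_pow]
  exact deg_rest p hp.ne_zero

/-- Uniqueness in the `C`-power basis. -/
lemma L1 (hp : p.Prime) (r : Fin (p + 1) → R p)
    (h : ∑ j : Fin (p + 1), ee p (r j) * X 0 ^ (j : ℕ) = 0) : ∀ j, r j = 0 := by
  haveI := Fact.mk hp
  set P : Polynomial (R p) := ∑ j : Fin (p + 1), Polynomial.C (r j) * Polynomial.X ^ (j : ℕ)
    with hP
  have hup : up p (AdjoinRoot.mk (fpoly p) P) = 0 := by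
    rw [up, AdjoinRoot.lift_mk, hP]
    rw [Polynomial.eval₂_finset_sum]
    simp only [Polynomial.eval₂_mul, Polynomial.eval₂_C, Polynomial.eval₂_pow,
      Polynomial.eval₂_X]
    exact h
  have h0 : AdjoinRoot.mk (fpoly p) P = 0 := by
    have h2 := down_up p (AdjoinRoot.mk (fpoly p) P)
    rw [hup, map_zero] at h2
    exact h2.symm
  have hdvd : fpoly p ∣ P := (AdjoinRoot.mk_eq_zero).mp h0
  have hdeg : P.degree < (fpoly p).degree := by
    rw [degree_fpoly p hp, hP]
    apply lt_of_le_of_lt (Polynomial.degree_sum_le _ _)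
    rw [Finset.sup_lt_iff (show (⊥ : WithBot ℕ) < ((p + 1 : ℕ) : WithBot ℕ) by exact_mod_cast WithBot.bot_lt_coe (p + 1))]
    intro j _
    apply lt_of_le_of_lt (Polynomial.degree_mul_le _ _)
    apply lt_of_le_of_lt (add_le_add Polynomial.degree_C_le (Polynomial.degree_X_pow_le _))
    rw [zero_add]
    exact_mod_cast j.isLt
  have hP0 : P = 0 := Polynomial.eq_zero_of_dvd_of_degree_lt hdvd hdeg
  intro j
  have hc := congrArg (fun q => Polynomial.coeff q (j : ℕ)) hP0
  simp only [hP, Polynomial.finset_sum_coeff, Polynomial.coeff_C_mul,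
    Polynomial.coeff_X_pow, Polynomial.coeff_zero, mul_ite, mul_one, mul_zero] at hc
  simp only [← Fin.ext_iff] at hc
  simp only [Finset.sum_ite_eq, Finset.mem_univ, if_true] at hc
  exact hc

lemma up_surj : Function.Surjective (up p) := by
  intro a
  induction a using MvPolynomial.induction_on with
  | C c =>
    refine ⟨AdjoinRoot.of (fpoly p) (C c), ?_⟩
    rw [up, AdjoinRoot.lift_of]
    show ee p (C c) = C c
    simp [ee]
  | add f g hf hg =>
    obtain ⟨x, hx⟩ := hf; obtain ⟨y, hy⟩ := hg
    exact ⟨x + y, by rw [map_add, hx, hy]⟩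
  | mul_X f i hf =>
    obtain ⟨x, hx⟩ := hf
    fin_cases i
    · exact ⟨x * AdjoinRoot.root (fpoly p), by
        rw [map_mul, hx, up, AdjoinRoot.lift_root]
        rfl⟩
    · refine ⟨x * (AdjoinRoot.of (fpoly p) (X 0) - AdjoinRoot.root (fpoly p) ^ p), ?_⟩
      rw [map_mul, hx]
      congr 1
      rw [map_sub, map_pow, up, AdjoinRoot.lift_of, AdjoinRoot.lift_root]
      show ee p (X 0) - X 0 ^ p = X 1
      rw [ee_X0]; ring

/-- Existence in the `C`-power basis. -/
lemma L2 (hp : p.Prime) (a : R p) :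
    ∃ r : Fin (p + 1) → R p, a = ∑ j : Fin (p + 1), ee p (r j) * X 0 ^ (j : ℕ) := by
  haveI := Fact.mk hp
  obtain ⟨z, hz⟩ := up_surj p a
  obtain ⟨P, rfl⟩ := AdjoinRoot.mk_surjective z
  set Q := P %ₘ fpoly p with hQ
  have hmk : AdjoinRoot.mk (fpoly p) Q = AdjoinRoot.mk (fpoly p) P := by
    rw [AdjoinRoot.mk_eq_mk]
    refine ⟨-(P /ₘ fpoly p), ?_⟩
    have := Polynomial.modByMonic_add_div P (fpoly p)
    linear_combination this
  have hdeg : Q.natDegree < p + 1 := by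
    have hd : Q.degree < ((p + 1 : ℕ) : WithBot ℕ) := by
      rw [← degree_fpoly p hp]
      exact Polynomial.degree_modByMonic_lt P (monic_fpoly p hp.ne_zero)
    rcases eq_or_ne Q 0 with h | h
    · rw [h]; simpa using Nat.succ_pos p
    · exact (Polynomial.natDegree_lt_iff_degree_lt h).mpr hd
  have hsum := Polynomial.as_sum_range' Q (p + 1) hdeg
  refine ⟨fun j => Q.coeff (j : ℕ), ?_⟩
  rw [← hz, ← hmk, up, AdjoinRoot.lift_mk]
  conv_lhs => rw [hsum]
  rw [Polynomial.eval₂_finset_sum]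
  rw [Fin.sum_univ_eq_sum_range (fun i => ee p (Q.coeff i) * X 0 ^ i)]
  apply Finset.sum_congr rfl
  intro i _
  rw [Polynomial.eval₂_monomial]
  rfl

/-- Triangular change of coefficients between the `C`-power basis and the statement basis. -/
def T (d : Fin (p + 1) → R p) : Fin (p + 1) → R p := fun j =>
  if (j : ℕ) = p then -(d j)
  else if (j : ℕ) = 0 then d j + X 0 * d (Fin.last p) else d j

lemma T_last (d : Fin (p + 1) → R p) : T p d (Fin.last p) = -(d (Fin.last p)) := by
  simp [T]

lemma T_T (hp : p ≠ 0) (d : Fin (p + 1) → R p) : T p (T p d) = d := by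
  funext j
  rcases eq_or_ne (j : ℕ) p with h | h
  · have hj : j = Fin.last p := by
      apply Fin.ext; simpa using h
    subst hj
    rw [T_last, T_last, neg_neg]
  · rcases eq_or_ne (j : ℕ) 0 with h0 | h0
    · have : T p (T p d) j = T p d j + X 0 * T p d (Fin.last p) := by
        rw [T]; rw [if_neg h, if_pos h0]
      rw [this, T_last]
      have : T p d j = d j + X 0 * d (Fin.last p) := by
        rw [T]; rw [if_neg h, if_pos h0]
      rw [this]; ring
    · have e : ∀ u : Fin (p + 1) → R p, T p u j = u j := fun u => by
        rw [T]; rw [if_neg h, if_neg h0]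
      rw [e, e]

lemma conv (hp : p ≠ 0) (d : Fin (p + 1) → R p) :
    ∑ j : Fin (p + 1), ee p (d j) * (if (j : ℕ) = p then X 1 else X 0 ^ (j : ℕ))
      = ∑ j : Fin (p + 1), ee p (T p d j) * X 0 ^ (j : ℕ) := by
  haveI : NeZero p := ⟨hp⟩
  have hne : ∀ i : Fin p, ((i.castSucc : Fin (p + 1)) : ℕ) ≠ p := fun i => by
    simpa using Nat.ne_of_lt i.isLt
  have hT : ∀ i : Fin p, T p d i.castSucc
      = d i.castSucc + (if i = 0 then X 0 * d (Fin.last p) else 0) := fun i => by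
    rw [T]
    rw [if_neg (hne i)]
    rcases eq_or_ne i (0 : Fin p) with h0 | h0
    · subst h0; rw [if_pos (by simp), if_pos rfl]
    · rw [if_neg (by rw [Fin.coe_castSucc]; intro h; exact h0 (Fin.ext h)), if_neg h0, add_zero]
  have hLHS : (∑ j : Fin (p + 1), ee p (d j) * (if (j : ℕ) = p then X 1 else X 0 ^ (j : ℕ)))
      = (∑ i : Fin p, ee p (d i.castSucc) * X 0 ^ (i : ℕ)) + ee p (d (Fin.last p)) * X 1 := by
    rw [Fin.sum_univ_castSucc]
    congr 1
    · exact Finset.sum_congr rfl fun i _ => by rw [if_neg (hne i), Fin.coe_castSucc]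
    · rw [if_pos (Fin.val_last p)]
  have hRHS : (∑ j : Fin (p + 1), ee p (T p d j) * X 0 ^ (j : ℕ))
      = ((∑ i : Fin p, ee p (d i.castSucc) * X 0 ^ (i : ℕ)) + ee p (X 0 * d (Fin.last p)))
        - ee p (d (Fin.last p)) * X 0 ^ p := by
    rw [Fin.sum_univ_castSucc]
    have h2 : ∀ i : Fin p, ee p (T p d i.castSucc) * X 0 ^ ((i.castSucc : Fin (p + 1)) : ℕ)
        = ee p (d i.castSucc) * X 0 ^ (i : ℕ)
          + (if i = 0 then ee p (X 0 * d (Fin.last p)) else 0) := fun i => by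
      rw [hT i, map_add, add_mul, Fin.coe_castSucc]
      congr 1
      rcases eq_or_ne i (0 : Fin p) with h0 | h0
      · subst h0; rw [if_pos rfl, if_pos rfl]; simp
      · rw [if_neg h0, if_neg h0, map_zero, zero_mul]
    rw [Finset.sum_congr rfl fun i _ => h2 i, Finset.sum_add_distrib]
    rw [Finset.sum_ite_eq' Finset.univ (0 : Fin p) (fun _ => ee p (X 0 * d (Fin.last p)))]
    rw [T_last, Fin.val_last, map_neg]
    simp only [Finset.mem_univ, if_true]
    ring
  rw [hLHS, hRHS, map_mul, ee_X0]
  ring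

lemma range_gv : Set.range (gv p) = {X 0 ^ p + X 1, X 0 * X 1} := by
  ext a
  constructor
  · rintro ⟨i, rfl⟩
    fin_cases i
    · left; rfl
    · right; rfl
  · rintro (rfl | rfl)
    · exact ⟨0, rfl⟩
    · exact ⟨1, rfl⟩

lemma adjoin_eq :
    Algebra.adjoin (ZMod p) ({X 0 ^ p + X 1, X 0 * X 1} : Set (R p)) = (ee p).range := by
  rw [← range_gv, Algebra.adjoin_range_eq_range_aeval]
  rfl

lemma mem_adjoin (r : R p) :
    ee p r ∈ Algebra.adjoin (ZMod p) ({X 0 ^ p + X 1, X 0 * X 1} : Set (R p)) := by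
  rw [adjoin_eq]; exact ⟨r, rfl⟩

end Stmt11Aux
end


open Stmt11Aux

/-- `A = F_p[C,V]` (with `C = X 0`, `V = X 1`) is a free module over
`D = F_p[D₁,D₂]`, `D₁ = C^p + V`, `D₂ = CV`, with basis
`1, C, C², …, C^(p-1), V`: every element has a unique expression
`∑_{i<p} d_i C^i + d_p V` with coefficients in `D`. -/
theorem stmt11 (p : ℕ) (hp : p.Prime) (hodd : Odd p) :
    ∀ f : MvPolynomial (Fin 2) (ZMod p),
      ∃! c : Fin (p + 1) →
          Algebra.adjoin (ZMod p)
            ({X 0 ^ p + X 1, X 0 * X 1} : Set (MvPolynomial (Fin 2) (ZMod p))),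
        f = ∑ i : Fin (p + 1),
          (c i : MvPolynomial (Fin 2) (ZMod p)) *
            (if (i : ℕ) = p then X 1 else X 0 ^ (i : ℕ)) := by
  intro a
  have hp0 : p ≠ 0 := hp.ne_zero
  obtain ⟨r, hr⟩ := L2 p hp a
  have hrep : a = ∑ j : Fin (p + 1),
      ee p (T p r j) * (if (j : ℕ) = p then X 1 else X 0 ^ (j : ℕ)) := by
    rw [conv p hp0 (T p r), T_T p hp0 r]
    exact hr
  refine ⟨fun j => ⟨ee p (T p r j), mem_adjoin p (T p r j)⟩, hrep, ?_⟩
  rintro c' hc'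
  have hex : ∀ j, ∃ s, ee p s = (c' j : R p) := fun j => by
    have h2 : (c' j : R p) ∈ (ee p).range := (le_of_eq (adjoin_eq p)) (c' j).2
    obtain ⟨s, hs⟩ := h2
    exact ⟨s, hs⟩
  choose s hs using hex
  have hsum : ∑ j : Fin (p + 1), ee p (s j) * (if (j : ℕ) = p then X 1 else X 0 ^ (j : ℕ))
      = ∑ j : Fin (p + 1), ee p (T p r j) * (if (j : ℕ) = p then X 1 else X 0 ^ (j : ℕ)) := by
    rw [Finset.sum_congr rfl (fun j _ => by rw [hs j])]
    exact hc'.symm.trans hrep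
  rw [conv p hp0 s, conv p hp0 (T p r)] at hsum
  have hzero : ∑ j : Fin (p + 1), ee p (T p s j - T p (T p r) j) * X 0 ^ (j : ℕ) = 0 := by
    simp only [map_sub, sub_mul]
    rw [Finset.sum_sub_distrib, hsum, sub_self]
  have hz := L1 p hp _ hzero
  have hTs : T p s = T p (T p r) := funext fun j => by
    have := hz j; exact sub_eq_zero.mp this
  have hsr : s = T p r := by
    have := congrArg (T p) hTs
    rwa [T_T p hp0, T_T p hp0] at this
  funext j
  apply Subtype.ext
  show (c' j : R p) = ee p (T p r j)
  rw [← hs j, hsr]
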